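/- Let B be the open ball in ℝ^N centered at 0 (of any radius) and let (β,w) be a classical eigenvector of the Reissner–Mindlin system on B with eigenvalue γ. Let A be an orthogonal linear transformation of ℝ^N with matrix M. Then the pair ((β∘A)·M, w∘A), i.e. x ↦ (β(Ax))·M together with x ↦ w(Ax) (β a row vector), is also a classical eigenvector of the Reissner–Mindlin system on B with the same eigenvalue γ. -/

import Mathlib

open MeasureTheory Set Filter
noncomputable section
open scoped Classical

abbrev EV (N : ℕ) := EuclideanSpace ℝ (Fin N)

def ebasis (N : ℕ) (i : Fin N) : EV N := EuclideanSpace.single i 1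

/-- partial derivative of a scalar function in the `i`-th coordinate direction -/
def pder {N : ℕ} (i : Fin N) (f : EV N → ℝ) : EV N → ℝ :=
  fun x => fderiv ℝ f x (ebasis N i)

/-- `(i,j)` entry of the Jacobian matrix of `β` at `x` -/
def jacEntry {N : ℕ} (β : EV N → EV N) (x : EV N) (i j : Fin N) : ℝ :=
  fderiv ℝ β x (ebasis N j) i

/-- squared Frobenius norm of the Jacobian matrix of `β` at `x` -/
def frobSq {N : ℕ} (β : EV N → EV N) (x : EV N) : ℝ :=
  ∑ i, ∑ j, (jacEntry β x i j)^2

/-- divergence of `β` at `x` -/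
def divg {N : ℕ} (β : EV N → EV N) (x : EV N) : ℝ :=
  ∑ i, jacEntry β x i i

/-- the `l`-th component function of a vector field -/
def compF {N : ℕ} (β : EV N → EV N) (l : Fin N) : EV N → ℝ := fun x => β x l

/-- the Laplacian of a scalar function -/
def lapl {N : ℕ} (f : EV N → ℝ) (x : EV N) : ℝ := ∑ i, pder i (pder i f) x

/-- `(β, w)` is a classical eigenvector of the Reissner–Mindlin system on the
ball of radius `R` centered at `0`, with eigenvalue `γ`. -/
structure IsRMEigenOn {N : ℕ} (R t lam mu kk γ : ℝ)
    (β : EV N → EV N) (w : EV N → ℝ) : Prop where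
  regβ : ContDiffOn ℝ 2 β (Metric.closedBall (0 : EV N) R)
  regw : ContDiffOn ℝ 2 w (Metric.closedBall (0 : EV N) R)
  eq1 : ∀ x ∈ Metric.ball (0 : EV N) R, ∀ l : Fin N,
    -(mu/12) * lapl (compF β l) x - ((mu+lam)/12) * pder l (divg β) x
      - (mu*kk/t^2) * (pder l w x - β x l) = (γ * t^2/12) * β x l
  eq2 : ∀ x ∈ Metric.ball (0 : EV N) R,
    -(mu*kk/t^2) * (lapl w x - divg β x) = γ * w x
  bdβ : ∀ x ∈ Metric.sphere (0 : EV N) R, β x = 0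
  bdw : ∀ x ∈ Metric.sphere (0 : EV N) R, w x = 0

/-- the linear map with matrix `M`, acting on `ℝ^N` -/
def mvec {N : ℕ} (M : Matrix (Fin N) (Fin N) ℝ) (x : EV N) : EV N :=
  WithLp.toLp 2 (fun i => ∑ j, M i j * x j)

/-- the rotated vector field `x ↦ β(Ax)·M` (`β` a row vector, `A` with matrix `M`) -/
def rotVec {N : ℕ} (M : Matrix (Fin N) (Fin N) ℝ) (β : EV N → EV N) :
    EV N → EV N :=
  fun x => WithLp.toLp 2 (fun i => ∑ j, β (mvec M x) j * M j i)

/-- the rotated scalar field `x ↦ w(Ax)` -/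
def rotScal {N : ℕ} (M : Matrix (Fin N) (Fin N) ℝ) (w : EV N → ℝ) : EV N → ℝ :=
  fun x => w (mvec M x)

/-- directional derivative of a vector field along the radial direction `n(x) = x/|x|` -/
def nderV {N : ℕ} (β : EV N → EV N) (x : EV N) : EV N :=
  fderiv ℝ β x (‖x‖⁻¹ • x)

/-- directional derivative of a scalar function along the radial direction `n(x) = x/|x|` -/
def nderS {N : ℕ} (w : EV N → ℝ) (x : EV N) : ℝ :=
  fderiv ℝ w x (‖x‖⁻¹ • x)

def matCLM {N : ℕ} (M : Matrix (Fin N) (Fin N) ℝ) : EV N →L[ℝ] EV N :=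
  LinearMap.toContinuousLinearMap
    { toFun := mvec M
      map_add' := by
        intro x y; ext i
        simp [mvec, PiLp.add_apply, mul_add, Finset.sum_add_distrib]
      map_smul' := by
        intro c x; ext i
        simp [mvec, PiLp.smul_apply, smul_eq_mul, Finset.mul_sum, mul_left_comm] }
lemma matCLM_apply {N : ℕ} (M : Matrix (Fin N) (Fin N) ℝ) (x : EV N) :
    matCLM M x = mvec M x := rfl

lemma matCLM_coord {N : ℕ} (M : Matrix (Fin N) (Fin N) ℝ) (x : EV N) (i : Fin N) :
    matCLM M x i = ∑ j, M i j * x j := by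
  rw [matCLM_apply]; simp [mvec]

lemma matCLM_ebasis {N : ℕ} (M : Matrix (Fin N) (Fin N) ℝ) (i p : Fin N) :
    matCLM M (ebasis N i) p = M p i := by
  simp [matCLM_coord, ebasis, EuclideanSpace.single_apply]

/-- contraction against an orthogonal matrix -/
lemma orth_contract {N : ℕ} {M : Matrix (Fin N) (Fin N) ℝ} (hMMT : M * M.transpose = 1)
    (a : Fin N → Fin N → ℝ) :
    ∑ i, ∑ p, M p i * ∑ q, M q i * a p q = ∑ p, a p p := by
  have key : ∀ p q : Fin N, (∑ i, M p i * M q i) = if p = q then 1 else 0 := by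
    intro p q
    have := congrArg (fun A => A p q) hMMT
    simpa [Matrix.mul_apply, Matrix.one_apply, Matrix.transpose_apply] using this
  calc ∑ i, ∑ p, M p i * ∑ q, M q i * a p q
      = ∑ p, ∑ q, (∑ i, M p i * M q i) * a p q := by
        rw [Finset.sum_comm]
        refine Finset.sum_congr rfl fun p _ => ?_
        simp only [Finset.mul_sum]
        rw [Finset.sum_comm]
        refine Finset.sum_congr rfl fun q _ => ?_
        rw [Finset.sum_mul]
        refine Finset.sum_congr rfl fun i _ => by ring
    _ = ∑ p, a p p := by
        refine Finset.sum_congr rfl fun p _ => ?_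
        simp [key]

lemma norm_matCLM {N : ℕ} {M : Matrix (Fin N) (Fin N) ℝ} (hM : M.transpose * M = 1)
    (x : EV N) : ‖matCLM M x‖ = ‖x‖ := by
  have key : ∀ j k : Fin N, (∑ i, M i j * M i k) = if j = k then 1 else 0 := by
    intro j k
    have := congrArg (fun A => A j k) hM
    simpa [Matrix.mul_apply, Matrix.one_apply, Matrix.transpose_apply] using this
  rw [EuclideanSpace.norm_eq, EuclideanSpace.norm_eq]
  congr 1
  have : ∑ i, ‖matCLM M x i‖ ^ 2 = ∑ i, ∑ j, ∑ k, M i j * x j * (M i k * x k) := by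
    refine Finset.sum_congr rfl fun i _ => ?_
    rw [Real.norm_eq_abs, sq_abs, matCLM_coord, sq, Finset.sum_mul_sum]
  rw [this]
  calc ∑ i, ∑ j, ∑ k, M i j * x j * (M i k * x k)
      = ∑ j, ∑ k, (∑ i, M i j * M i k) * (x j * x k) := by
        rw [Finset.sum_comm]
        refine Finset.sum_congr rfl fun j _ => ?_
        rw [Finset.sum_comm]
        refine Finset.sum_congr rfl fun k _ => ?_
        rw [Finset.sum_mul]
        refine Finset.sum_congr rfl fun i _ => by ring
    _ = ∑ j, ‖x j‖ ^ 2 := by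
        refine Finset.sum_congr rfl fun j _ => ?_
        simp [key, Real.norm_eq_abs, sq_abs, sq]

lemma decomp_ev {N : ℕ} (v : EV N) : v = ∑ p, v p • ebasis N p := by
  ext i
  rw [show ((∑ p, v p • ebasis N p : EV N) i) = ∑ p, (v p • ebasis N p : EV N) i from
    by rw [WithLp.ofLp_sum, Finset.sum_apply]]
  simp [ebasis, EuclideanSpace.single_apply]

lemma clm_expand {N : ℕ} (φ : EV N →L[ℝ] ℝ) (v : EV N) :
    φ v = ∑ p, v p * φ (ebasis N p) := by
  conv_lhs => rw [decomp_ev v]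
  rw [map_sum]
  simp [smul_eq_mul]

lemma clm_expand_vec {N : ℕ} (φ : EV N →L[ℝ] EV N) (v : EV N) (a : Fin N) :
    φ v a = ∑ p, v p * φ (ebasis N p) a := by
  conv_lhs => rw [decomp_ev v]
  rw [map_sum]
  rw [show ((∑ p, φ (v p • ebasis N p) : EV N) a) = ∑ p, φ (v p • ebasis N p) a from
    by rw [WithLp.ofLp_sum, Finset.sum_apply]]
  refine Finset.sum_congr rfl fun p _ => ?_
  rw [_root_.map_smul]
  simp [PiLp.smul_apply]

lemma closedBall_mem_nhds_of_ball {N : ℕ} {R : ℝ} {x : EV N}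
    (hx : x ∈ Metric.ball (0 : EV N) R) :
    Metric.closedBall (0 : EV N) R ∈ nhds x :=
  Filter.mem_of_superset (Metric.isOpen_ball.mem_nhds hx) Metric.ball_subset_closedBall

lemma diffAt_of_C2 {N : ℕ} {R : ℝ} {E : Type*} [NormedAddCommGroup E] [NormedSpace ℝ E]
    {f : EV N → E} (hf : ContDiffOn ℝ 2 f (Metric.closedBall 0 R))
    {x : EV N} (hx : x ∈ Metric.ball (0 : EV N) R) : DifferentiableAt ℝ f x :=
  (hf.contDiffAt (closedBall_mem_nhds_of_ball hx)).differentiableAt (by norm_num)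

lemma pder_diffAt_of_C2 {N : ℕ} {R : ℝ} {f : EV N → ℝ}
    (hf : ContDiffOn ℝ 2 f (Metric.closedBall 0 R))
    {x : EV N} (hx : x ∈ Metric.ball (0 : EV N) R) (p : Fin N) :
    DifferentiableAt ℝ (pder p f) x := by
  have h1 : ContDiffAt ℝ 1 (fderiv ℝ f) x :=
    (hf.contDiffAt (closedBall_mem_nhds_of_ball hx)).fderiv_right (by norm_num)
  have h2 : DifferentiableAt ℝ (fderiv ℝ f) x := h1.differentiableAt (by norm_num)
  show DifferentiableAt ℝ (fun y => fderiv ℝ f y (ebasis N p)) x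
  exact h2.clm_apply (differentiableAt_const _)

lemma pder_comp {N : ℕ} (M : Matrix (Fin N) (Fin N) ℝ) {f : EV N → ℝ} {x : EV N}
    (hf : DifferentiableAt ℝ f (matCLM M x)) (i : Fin N) :
    pder i (fun y => f (matCLM M y)) x = ∑ p, M p i * pder p f (matCLM M x) := by
  have h1 : fderiv ℝ (fun y => f (matCLM M y)) x
      = (fderiv ℝ f (matCLM M x)).comp (matCLM M) := by
    have h2 := fderiv_comp (𝕜 := ℝ) x hf (matCLM M).differentiableAt
    simpa [Function.comp_def, (matCLM M).fderiv] using h2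
  show fderiv ℝ (fun y => f (matCLM M y)) x (ebasis N i) = _
  rw [h1, ContinuousLinearMap.comp_apply, clm_expand]
  refine Finset.sum_congr rfl fun p _ => ?_
  rw [matCLM_ebasis]
  rfl

lemma pder_sum_const_mul {N : ℕ} {ι : Type*} [Fintype ι] (c : ι → ℝ) (g : ι → EV N → ℝ)
    {x : EV N} (hg : ∀ j, DifferentiableAt ℝ (g j) x) (i : Fin N) :
    pder i (fun y => ∑ j, c j * g j y) x = ∑ j, c j * pder i (g j) x := by
  show fderiv ℝ (fun y => ∑ j, c j * g j y) x (ebasis N i) = _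
  rw [fderiv_fun_sum (fun j _ => (hg j).const_mul (c j)), ContinuousLinearMap.sum_apply]
  refine Finset.sum_congr rfl fun j _ => ?_
  rw [fderiv_const_mul (hg j) (c j), ContinuousLinearMap.smul_apply, smul_eq_mul]
  rfl

lemma pder_congr_ev {N : ℕ} {f g : EV N → ℝ} {x : EV N} (h : f =ᶠ[nhds x] g) (i : Fin N) :
    pder i f x = pder i g x := by
  show fderiv ℝ f x (ebasis N i) = fderiv ℝ g x (ebasis N i)
  rw [h.fderiv_eq]

lemma jacEntry_eq_pder {N : ℕ} {β : EV N → EV N} {x : EV N}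
    (hβ : DifferentiableAt ℝ β x) (i j : Fin N) :
    jacEntry β x i j = pder j (compF β i) x := by
  have h1 : fderiv ℝ (compF β i) x
      = (EuclideanSpace.proj (𝕜 := ℝ) i).comp (fderiv ℝ β x) := by
    have h2 := fderiv_comp (𝕜 := ℝ) x (EuclideanSpace.proj (𝕜 := ℝ) i).differentiableAt hβ
    rw [(EuclideanSpace.proj (𝕜 := ℝ) i).fderiv] at h2; exact h2
  show fderiv ℝ β x (ebasis N j) i = fderiv ℝ (compF β i) x (ebasis N j)
  rw [h1]
  rfl

lemma rotVec_eq {N : ℕ} (M : Matrix (Fin N) (Fin N) ℝ) (β : EV N → EV N) :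
    rotVec M β = fun x => matCLM M.transpose (β (matCLM M x)) := by
  funext x
  ext i
  rw [matCLM_coord]
  simp [rotVec, Matrix.transpose_apply, mul_comm, matCLM_apply]

lemma compF_diffAt {N : ℕ} {β : EV N → EV N} {z : EV N}
    (hβ : DifferentiableAt ℝ β z) (j : Fin N) : DifferentiableAt ℝ (compF β j) z :=
  (EuclideanSpace.proj (𝕜 := ℝ) j).differentiableAt.comp z hβ

lemma compF_contDiffOn {N : ℕ} {R : ℝ} {β : EV N → EV N}
    (hβ : ContDiffOn ℝ 2 β (Metric.closedBall 0 R)) (j : Fin N) :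
    ContDiffOn ℝ 2 (compF β j) (Metric.closedBall 0 R) :=
  (EuclideanSpace.proj (𝕜 := ℝ) j).contDiff.comp_contDiffOn hβ

lemma lapl_sum_const_mul {N : ℕ} {R : ℝ} {ι : Type*} [Fintype ι] (c : ι → ℝ)
    (f : ι → EV N → ℝ) (hf : ∀ j, ContDiffOn ℝ 2 (f j) (Metric.closedBall 0 R))
    {z : EV N} (hz : z ∈ Metric.ball (0 : EV N) R) :
    lapl (fun y => ∑ j, c j * f j y) z = ∑ j, c j * lapl (f j) z := by
  have step : ∀ i : Fin N, pder i (pder i (fun y => ∑ j, c j * f j y)) z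
      = ∑ j, c j * pder i (pder i (f j)) z := by
    intro i
    have hev : pder i (fun y => ∑ j, c j * f j y) =ᶠ[nhds z]
        fun y => ∑ j, c j * pder i (f j) y :=
      Filter.eventuallyEq_of_mem (Metric.isOpen_ball.mem_nhds hz)
        (fun y hy => pder_sum_const_mul c f (fun j => diffAt_of_C2 (hf j) hy) i)
    rw [pder_congr_ev hev i]
    exact pder_sum_const_mul c (fun j => pder i (f j))
      (fun j => pder_diffAt_of_C2 (hf j) hz i) i
  show ∑ i, pder i (pder i (fun y => ∑ j, c j * f j y)) z = _
  calc ∑ i, pder i (pder i (fun y => ∑ j, c j * f j y)) z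
      = ∑ i, ∑ j, c j * pder i (pder i (f j)) z :=
        Finset.sum_congr rfl fun i _ => step i
    _ = ∑ j, c j * ∑ i, pder i (pder i (f j)) z := by
        rw [Finset.sum_comm]
        exact Finset.sum_congr rfl fun j _ => (Finset.mul_sum _ _ _).symm
    _ = ∑ j, c j * lapl (f j) z := rfl

lemma lapl_comp {N : ℕ} {R : ℝ} {M : Matrix (Fin N) (Fin N) ℝ}
    (hM : M.transpose * M = 1) {F : EV N → ℝ}
    (hF : ContDiffOn ℝ 2 F (Metric.closedBall 0 R))
    {x : EV N} (hx : x ∈ Metric.ball (0 : EV N) R) :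
    lapl (fun y => F (matCLM M y)) x = lapl F (matCLM M x) := by
  have hMMT := mul_eq_one_comm.mp hM
  have hmem : ∀ {y : EV N}, y ∈ Metric.ball (0 : EV N) R →
      matCLM M y ∈ Metric.ball (0 : EV N) R := by
    intro y hy
    simpa [Metric.mem_ball, dist_zero_right, norm_matCLM hM] using hy
  have hLx := hmem hx
  have step : ∀ i : Fin N,
      pder i (pder i (fun y => F (matCLM M y))) x
        = ∑ p, M p i * ∑ q, M q i * pder q (pder p F) (matCLM M x) := by
    intro i
    have hev : pder i (fun y => F (matCLM M y)) =ᶠ[nhds x]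
        fun y => ∑ p, M p i * pder p F (matCLM M y) :=
      Filter.eventuallyEq_of_mem (Metric.isOpen_ball.mem_nhds hx)
        (fun y hy => pder_comp M (diffAt_of_C2 hF (hmem hy)) i)
    rw [pder_congr_ev hev i]
    rw [pder_sum_const_mul (fun p => M p i) (fun p y => pder p F (matCLM M y))
        (fun p => (pder_diffAt_of_C2 hF hLx p).comp x (matCLM M).differentiableAt) i]
    refine Finset.sum_congr rfl fun p _ => ?_
    congr 1
    exact pder_comp M (pder_diffAt_of_C2 hF hLx p) i
  show ∑ i, pder i (pder i (fun y => F (matCLM M y))) x = _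
  calc ∑ i, pder i (pder i (fun y => F (matCLM M y))) x
      = ∑ i, ∑ p, M p i * ∑ q, M q i * pder q (pder p F) (matCLM M x) :=
        Finset.sum_congr rfl fun i _ => step i
    _ = ∑ p, pder p (pder p F) (matCLM M x) := orth_contract hMMT _
    _ = lapl F (matCLM M x) := rfl

lemma matCLM_mem_ball {N : ℕ} {R : ℝ} {M : Matrix (Fin N) (Fin N) ℝ}
    (hM : M.transpose * M = 1) {y : EV N} (hy : y ∈ Metric.ball (0 : EV N) R) :
    matCLM M y ∈ Metric.ball (0 : EV N) R := by
  simpa [Metric.mem_ball, dist_zero_right, norm_matCLM hM] using hy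

lemma divg_rot {N : ℕ} {R : ℝ} {M : Matrix (Fin N) (Fin N) ℝ}
    (hM : M.transpose * M = 1) {β : EV N → EV N}
    (hβ : ContDiffOn ℝ 2 β (Metric.closedBall 0 R))
    {y : EV N} (hy : y ∈ Metric.ball (0 : EV N) R) :
    divg (rotVec M β) y = divg β (matCLM M y) := by
  have hMMT := mul_eq_one_comm.mp hM
  have hmem := matCLM_mem_ball hM hy
  have hβL : DifferentiableAt ℝ β (matCLM M y) := diffAt_of_C2 hβ hmem
  have hrot : DifferentiableAt ℝ (rotVec M β) y := by
    rw [rotVec_eq]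
    exact (matCLM M.transpose).differentiableAt.comp y
      (hβL.comp y (matCLM M).differentiableAt)
  have hcomp : ∀ i : Fin N,
      compF (rotVec M β) i = fun z => ∑ j, M j i * compF β j (matCLM M z) := by
    intro i; funext z
    simp [compF, rotVec, matCLM_apply, mul_comm]
  calc divg (rotVec M β) y
      = ∑ i, pder i (compF (rotVec M β) i) y :=
        Finset.sum_congr rfl fun i _ => jacEntry_eq_pder hrot i i
    _ = ∑ i, ∑ j, M j i * ∑ q, M q i * pder q (compF β j) (matCLM M y) := by
        refine Finset.sum_congr rfl fun i _ => ?_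
        rw [hcomp i]
        rw [pder_sum_const_mul (fun j => M j i) (fun j z => compF β j (matCLM M z))
            (fun j => (compF_diffAt hβL j).comp y (matCLM M).differentiableAt) i]
        refine Finset.sum_congr rfl fun j _ => ?_
        congr 1
        exact pder_comp M (compF_diffAt hβL j) i
    _ = ∑ j, pder j (compF β j) (matCLM M y) := orth_contract hMMT _
    _ = divg β (matCLM M y) :=
        Finset.sum_congr rfl fun j _ => (jacEntry_eq_pder hβL j j).symm

lemma divg_diffAt {N : ℕ} {R : ℝ} {β : EV N → EV N}
    (hβ : ContDiffOn ℝ 2 β (Metric.closedBall 0 R))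
    {x : EV N} (hx : x ∈ Metric.ball (0 : EV N) R) :
    DifferentiableAt ℝ (divg β) x := by
  have hev : divg β =ᶠ[nhds x] fun z => ∑ i, pder i (compF β i) z :=
    Filter.eventuallyEq_of_mem (Metric.isOpen_ball.mem_nhds hx)
      (fun y hy => Finset.sum_congr rfl fun i _ =>
        jacEntry_eq_pder (diffAt_of_C2 hβ hy) i i)
  have hdiff : DifferentiableAt ℝ (fun z => ∑ i, pder i (compF β i) z) x :=
    DifferentiableAt.fun_sum fun i _ => pder_diffAt_of_C2 (compF_contDiffOn hβ i) hx i
  exact hdiff.congr_of_eventuallyEq hev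

/-- rotation invariance of Reissner–Mindlin eigenvectors on a ball:
if `(β,w)` is an eigenvector with eigenvalue `γ` and `A` is orthogonal with matrix `M`,
then `((β∘A)·M, w∘A)` is again an eigenvector with eigenvalue `γ`. -/
theorem eigenvector_rotation_invariance
    (N : ℕ) (hN : 2 ≤ N) (t lam mu kk : ℝ)
    (ht : 0 < t) (hlam : 0 < lam) (hmu : 0 < mu) (hkk : 0 < kk)
    (R : ℝ) (hR : 0 < R) (γ : ℝ)
    (β : EV N → EV N) (w : EV N → ℝ)
    (h : IsRMEigenOn R t lam mu kk γ β w)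
    (M : Matrix (Fin N) (Fin N) ℝ) (hM : M.transpose * M = 1) :
    IsRMEigenOn R t lam mu kk γ (rotVec M β) (rotScal M w) := by
  have hMMT := mul_eq_one_comm.mp hM
  have hmaps : Set.MapsTo (⇑(matCLM M)) (Metric.closedBall (0 : EV N) R)
      (Metric.closedBall (0 : EV N) R) := by
    intro y hy
    simpa [Metric.mem_closedBall, dist_zero_right, norm_matCLM hM] using hy
  constructor
  · -- regβ
    rw [rotVec_eq]
    exact (matCLM M.transpose).contDiff.comp_contDiffOn
      (h.regβ.comp ((matCLM M).contDiff.contDiffOn) hmaps)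
  · -- regw
    exact h.regw.comp ((matCLM M).contDiff.contDiffOn) hmaps
  · -- eq1
    intro x hx l
    have hLx := matCLM_mem_ball hM hx
    have T1 : lapl (compF (rotVec M β) l) x
        = ∑ j, M j l * lapl (compF β j) (matCLM M x) := by
      have hfun : compF (rotVec M β) l
          = fun y => (fun z => ∑ j, M j l * compF β j z) (matCLM M y) := by
        funext z
        simp [compF, rotVec, matCLM_apply, mul_comm]
      rw [hfun,
        lapl_comp hM (ContDiffOn.sum fun j _ =>
          contDiffOn_const.mul (compF_contDiffOn h.regβ j)) hx,
        lapl_sum_const_mul (fun j => M j l) (fun j => compF β j)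
          (fun j => compF_contDiffOn h.regβ j) hLx]
    have T2 : pder l (divg (rotVec M β)) x
        = ∑ p, M p l * pder p (divg β) (matCLM M x) := by
      have hev : divg (rotVec M β) =ᶠ[nhds x] fun y => divg β (matCLM M y) :=
        Filter.eventuallyEq_of_mem (Metric.isOpen_ball.mem_nhds hx)
          (fun y hy => divg_rot hM h.regβ hy)
      rw [pder_congr_ev hev l]
      exact pder_comp M (divg_diffAt h.regβ hLx) l
    have T3 : pder l (rotScal M w) x = ∑ p, M p l * pder p w (matCLM M x) :=
      pder_comp M (diffAt_of_C2 h.regw hLx) l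
    have T4 : rotVec M β x l = ∑ j, M j l * β (matCLM M x) j := by
      simp [rotVec, matCLM_apply, mul_comm]
    rw [T1, T2, T3, T4]
    have key :
        -(mu/12) * ∑ j, M j l * lapl (compF β j) (matCLM M x)
          - ((mu+lam)/12) * ∑ j, M j l * pder j (divg β) (matCLM M x)
          - (mu*kk/t^2) * ((∑ j, M j l * pder j w (matCLM M x))
              - ∑ j, M j l * β (matCLM M x) j)
        = ∑ j, M j l * (-(mu/12) * lapl (compF β j) (matCLM M x)
            - ((mu+lam)/12) * pder j (divg β) (matCLM M x)
            - (mu*kk/t^2) * (pder j w (matCLM M x) - β (matCLM M x) j)) := by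
      rw [← Finset.sum_sub_distrib]
      simp only [Finset.mul_sum]
      rw [← Finset.sum_sub_distrib, ← Finset.sum_sub_distrib]
      refine Finset.sum_congr rfl fun j _ => by ring
    rw [key]
    calc ∑ j, M j l * (-(mu/12) * lapl (compF β j) (matCLM M x)
            - ((mu+lam)/12) * pder j (divg β) (matCLM M x)
            - (mu*kk/t^2) * (pder j w (matCLM M x) - β (matCLM M x) j))
        = ∑ j, M j l * ((γ * t^2/12) * β (matCLM M x) j) :=
          Finset.sum_congr rfl fun j _ => by rw [h.eq1 (matCLM M x) hLx j]
      _ = (γ * t^2/12) * ∑ j, M j l * β (matCLM M x) j := by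
          rw [Finset.mul_sum]
          exact Finset.sum_congr rfl fun j _ => by ring
  · -- eq2
    intro x hx
    have hLx := matCLM_mem_ball hM hx
    have E1 : lapl (rotScal M w) x = lapl w (matCLM M x) := lapl_comp hM h.regw hx
    have E2 : divg (rotVec M β) x = divg β (matCLM M x) := divg_rot hM h.regβ hx
    have E3 : rotScal M w x = w (matCLM M x) := rfl
    rw [E1, E2, E3]
    exact h.eq2 (matCLM M x) hLx
  · -- bdβ
    intro x hx
    have hLx : matCLM M x ∈ Metric.sphere (0 : EV N) R := by
      simpa [Metric.mem_sphere, dist_zero_right, norm_matCLM hM] using hx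
    have h0 := h.bdβ _ hLx
    ext i
    show ∑ j, β (mvec M x) j * M j i = (0 : EV N) i
    rw [show mvec M x = matCLM M x from rfl, h0]
    simp
  · -- bdw
    intro x hx
    have hLx : matCLM M x ∈ Metric.sphere (0 : EV N) R := by
      simpa [Metric.mem_sphere, dist_zero_right, norm_matCLM hM] using hx
    show w (mvec M x) = 0
    rw [show mvec M x = matCLM M x from rfl]
    exact h.bdw _ hLx


end
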